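/- Suppose that for every ε > 0 there is δ > 0 such that whenever A is a unital AF algebra and φ : A → A is a δ-*-isomorphism, there is a *-isomorphism ψ : A → A with ‖φ(x) − ψ(x)‖ < ε for all x in the closed unit ball of A. Then for every ε > 0 there is δ > 0 such that whenever A is a unital AF algebra, H is a complex Hilbert space, and A₁, A₂ are C*-subalgebras of B(H) each *-isomorphic to A with d_KK(A₁, A₂) < δ, there is a *-isomorphism φ : A₁ → A₂ with ‖φ(x) − x‖ < ε for all x in the closed unit ball of A₁. -/

import Mathlib

/-- `φ : A → B` (not assumed linear or continuous) is an `ε`-*-homomorphism. -/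
def IsApproxStarHom {A B : Type*}
    [NonUnitalNormedRing A] [StarRing A] [Module ℂ A]
    [NonUnitalNormedRing B] [StarRing B] [Module ℂ B]
    (ε : ℝ) (φ : A → B) : Prop :=
  (∀ x y : A, ‖x‖ ≤ 1 → ‖y‖ ≤ 1 → ‖φ (x + y) - φ x - φ y‖ ≤ ε) ∧
  (∀ (x : A) (l : ℂ), ‖x‖ ≤ 1 → ‖l‖ ≤ 1 → ‖φ (l • x) - l • φ x‖ ≤ ε) ∧
  (∀ x y : A, ‖x‖ ≤ 1 → ‖y‖ ≤ 1 → ‖φ (x * y) - φ x * φ y‖ ≤ ε) ∧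
  (∀ x : A, ‖x‖ ≤ 1 → ‖φ (star x) - star (φ x)‖ ≤ ε) ∧
  (∀ x : A, ‖x‖ ≤ 1 → ‖φ x‖ ≤ 1 + ε)

/-- An `ε`-*-isomorphism: an `ε`-isometric, `ε`-surjective `ε`-*-homomorphism. -/
def IsApproxStarIso {A B : Type*}
    [NonUnitalNormedRing A] [StarRing A] [Module ℂ A]
    [NonUnitalNormedRing B] [StarRing B] [Module ℂ B]
    (ε : ℝ) (φ : A → B) : Prop :=
  IsApproxStarHom ε φ ∧
  (∀ x : A, ‖x‖ = 1 → ‖φ x‖ ∈ Set.Icc (1 - ε) (1 + ε)) ∧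
  (∀ b : B, ‖b‖ ≤ 1 → ∃ a : A, ‖φ a - b‖ ≤ ε)

/-- A unital C*-algebra is AF if it admits a directed family of finite-dimensional
unital *-subalgebras whose union is dense. -/
def IsAFAlgebra (A : Type*) [NormedRing A] [StarRing A] [CStarRing A]
    [NormedAlgebra ℂ A] [StarModule ℂ A] [CompleteSpace A] : Prop :=
  ∃ 𝒮 : Set (StarSubalgebra ℂ A), 𝒮.Nonempty ∧ DirectedOn (· ≤ ·) 𝒮 ∧
    (∀ S ∈ 𝒮, FiniteDimensional ℂ S) ∧ Dense (⋃ S ∈ 𝒮, (S : Set A))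

/-- The Kadison–Kastler distance between two subsets of `B(H)`. -/
noncomputable def dKK {H : Type*} [NormedAddCommGroup H] [InnerProductSpace ℂ H]
    [CompleteSpace H] (A B : Set (H →L[ℂ] H)) : ℝ :=
  max
    (⨆ x : {x : H →L[ℂ] H // x ∈ A ∧ ‖x‖ = 1},
      ⨅ y : {y : H →L[ℂ] H // y ∈ B ∧ ‖y‖ = 1}, ‖(x : H →L[ℂ] H) - (y : H →L[ℂ] H)‖)
    (⨆ y : {y : H →L[ℂ] H // y ∈ B ∧ ‖y‖ = 1},
      ⨅ x : {x : H →L[ℂ] H // x ∈ A ∧ ‖x‖ = 1}, ‖(x : H →L[ℂ] H) - (y : H →L[ℂ] H)‖)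

section Aux

variable {H : Type*} [NormedAddCommGroup H] [InnerProductSpace ℂ H] [CompleteSpace H]

/-- Extraction of nearby elements from a bound on one component of the KK distance. -/
lemma near_of_sup_inf_lt {A B : Set (H →L[ℂ] H)} {δ : ℝ}
    (hne : Nonempty {y : H →L[ℂ] H // y ∈ B ∧ ‖y‖ = 1})
    (hsup : (⨆ x : {x : H →L[ℂ] H // x ∈ A ∧ ‖x‖ = 1},
      ⨅ y : {y : H →L[ℂ] H // y ∈ B ∧ ‖y‖ = 1},
        ‖(x : H →L[ℂ] H) - (y : H →L[ℂ] H)‖) < δ)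
    {x : H →L[ℂ] H} (hx : x ∈ A) (hx1 : ‖x‖ = 1) :
    ∃ y : H →L[ℂ] H, y ∈ B ∧ ‖y‖ = 1 ∧ ‖x - y‖ < δ := by
  haveI := hne
  obtain ⟨⟨y₀, hy₀, hy₀1⟩⟩ := hne
  have hbb : ∀ z : H →L[ℂ] H, BddBelow (Set.range fun y : {y : H →L[ℂ] H // y ∈ B ∧ ‖y‖ = 1} =>
      ‖z - (y : H →L[ℂ] H)‖) := by
    intro z
    exact ⟨0, by rintro r ⟨y, rfl⟩; positivity⟩
  have hba : BddAbove (Set.range fun x : {x : H →L[ℂ] H // x ∈ A ∧ ‖x‖ = 1} =>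
      ⨅ y : {y : H →L[ℂ] H // y ∈ B ∧ ‖y‖ = 1}, ‖(x : H →L[ℂ] H) - (y : H →L[ℂ] H)‖) := by
    refine ⟨2, ?_⟩
    rintro r ⟨⟨z, hz, hz1⟩, rfl⟩
    refine ciInf_le_of_le (hbb z) ⟨y₀, hy₀, hy₀1⟩ ?_
    calc ‖z - y₀‖ ≤ ‖z‖ + ‖y₀‖ := norm_sub_le _ _
    _ = 2 := by rw [hz1, hy₀1]; norm_num
  have h1 : (⨅ y : {y : H →L[ℂ] H // y ∈ B ∧ ‖y‖ = 1}, ‖x - (y : H →L[ℂ] H)‖) < δ :=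
    lt_of_le_of_lt (le_ciSup hba ⟨x, hx, hx1⟩) hsup
  obtain ⟨⟨y, hy, hy1⟩, hy2⟩ := exists_lt_of_ciInf_lt h1
  exact ⟨y, hy, hy1, hy2⟩

end Aux

section Aux2

variable {H : Type*} [NormedAddCommGroup H] [InnerProductSpace ℂ H] [CompleteSpace H]

lemma near_of_sup_inf_lt' {A B : Set (H →L[ℂ] H)} {δ : ℝ}
    (hne : Nonempty {x : H →L[ℂ] H // x ∈ A ∧ ‖x‖ = 1})
    (hsup : (⨆ y : {y : H →L[ℂ] H // y ∈ B ∧ ‖y‖ = 1},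
      ⨅ x : {x : H →L[ℂ] H // x ∈ A ∧ ‖x‖ = 1},
        ‖(x : H →L[ℂ] H) - (y : H →L[ℂ] H)‖) < δ)
    {y : H →L[ℂ] H} (hy : y ∈ B) (hy1 : ‖y‖ = 1) :
    ∃ x : H →L[ℂ] H, x ∈ A ∧ ‖x‖ = 1 ∧ ‖x - y‖ < δ := by
  haveI := hne
  obtain ⟨⟨x₀, hx₀, hx₀1⟩⟩ := hne
  have hbb : ∀ z : H →L[ℂ] H, BddBelow (Set.range fun x : {x : H →L[ℂ] H // x ∈ A ∧ ‖x‖ = 1} =>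
      ‖(x : H →L[ℂ] H) - z‖) := by
    intro z
    exact ⟨0, by rintro r ⟨x, rfl⟩; positivity⟩
  have hba : BddAbove (Set.range fun y : {y : H →L[ℂ] H // y ∈ B ∧ ‖y‖ = 1} =>
      ⨅ x : {x : H →L[ℂ] H // x ∈ A ∧ ‖x‖ = 1}, ‖(x : H →L[ℂ] H) - (y : H →L[ℂ] H)‖) := by
    refine ⟨2, ?_⟩
    rintro r ⟨⟨z, hz, hz1⟩, rfl⟩
    refine ciInf_le_of_le (hbb z) ⟨x₀, hx₀, hx₀1⟩ ?_
    calc ‖x₀ - z‖ ≤ ‖x₀‖ + ‖z‖ := norm_sub_le _ _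
    _ = 2 := by rw [hz1, hx₀1]; norm_num
  have h1 : (⨅ x : {x : H →L[ℂ] H // x ∈ A ∧ ‖x‖ = 1}, ‖(x : H →L[ℂ] H) - y‖) < δ :=
    lt_of_le_of_lt (le_ciSup hba ⟨y, hy, hy1⟩) hsup
  obtain ⟨⟨x, hx, hx1⟩, hx2⟩ := exists_lt_of_ciInf_lt h1
  exact ⟨x, hx, hx1, hx2⟩

end Aux2

universe u

set_option maxHeartbeats 2000000 in
/-- If approximate *-isomorphisms of unital AF algebras can be uniformly corrected to
*-isomorphisms, then Kadison–Kastler close copies (in `B(H)`) of a unital AF algebra are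
*-isomorphic via a map uniformly close to the identity. -/
theorem ulam_implies_kadisonKastler
    (hUlam : ∀ ε : ℝ, 0 < ε → ∃ δ : ℝ, 0 < δ ∧
      ∀ (A : Type u) [NormedRing A] [StarRing A] [CStarRing A] [NormedAlgebra ℂ A]
        [StarModule ℂ A] [CompleteSpace A], IsAFAlgebra A →
        ∀ φ : A → A, IsApproxStarIso δ φ →
          ∃ ψ : A ≃⋆ₐ[ℂ] A, ∀ x : A, ‖x‖ ≤ 1 → ‖φ x - ψ x‖ < ε) :
    ∀ ε : ℝ, 0 < ε → ∃ δ : ℝ, 0 < δ ∧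
      ∀ (A : Type u) (H : Type u)
        [NormedRing A] [StarRing A] [CStarRing A] [NormedAlgebra ℂ A]
        [StarModule ℂ A] [CompleteSpace A]
        [NormedAddCommGroup H] [InnerProductSpace ℂ H] [CompleteSpace H],
        IsAFAlgebra A →
        ∀ A₁ A₂ : StarSubalgebra ℂ (H →L[ℂ] H),
          IsClosed (A₁ : Set (H →L[ℂ] H)) → IsClosed (A₂ : Set (H →L[ℂ] H)) →
          Nonempty (A ≃⋆ₐ[ℂ] A₁) → Nonempty (A ≃⋆ₐ[ℂ] A₂) →
          dKK (A₁ : Set (H →L[ℂ] H)) (A₂ : Set (H →L[ℂ] H)) < δ →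
          ∃ φ : A₁ ≃⋆ₐ[ℂ] A₂, ∀ x : A₁, ‖(x : H →L[ℂ] H)‖ ≤ 1 →
            ‖(φ x : H →L[ℂ] H) - (x : H →L[ℂ] H)‖ < ε := by
  intro ε hε
  obtain ⟨δ₀, hδ₀, hU⟩ := hUlam (ε / 2) (by linarith)
  refine ⟨min (δ₀ / 4) (ε / 2), by positivity, ?_⟩
  set δ : ℝ := min (δ₀ / 4) (ε / 2) with hδdef
  have hδpos : 0 < δ := by positivity
  have hδ4 : 4 * δ ≤ δ₀ := by
    have h := min_le_left (δ₀ / 4) (ε / 2)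
    rw [← hδdef] at h; linarith
  have hδε : δ ≤ ε / 2 := min_le_right _ _
  intro A H _ _ _ _ _ _ _ _ _ hAF A₁ A₂ h₁c h₂c hn₁ hn₂ hd
  obtain ⟨θ₁⟩ := hn₁
  obtain ⟨θ₂⟩ := hn₂
  by_cases hS : Subsingleton (H →L[ℂ] H)
  · refine ⟨θ₁.symm.trans θ₂, fun x _ => ?_⟩
    have h0 : ((θ₁.symm.trans θ₂) x : H →L[ℂ] H) - (x : H →L[ℂ] H) = 0 :=
      Subsingleton.elim _ _
    rw [h0, norm_zero]; exact hε
  haveI : Nontrivial (H →L[ℂ] H) := not_subsingleton_iff_nontrivial.mp hS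
  haveI : CompleteSpace A₁ := h₁c.completeSpace_coe
  haveI : CompleteSpace A₂ := h₂c.completeSpace_coe
  letI : CStarAlgebra A := ⟨⟩
  letI : CStarAlgebra A₁ := ⟨⟩
  letI : CStarAlgebra A₂ := ⟨⟩
  rw [dKK, max_lt_iff] at hd
  obtain ⟨hd₁, hd₂⟩ := hd
  haveI hne₁ : Nonempty {x : H →L[ℂ] H // x ∈ (A₁ : Set (H →L[ℂ] H)) ∧ ‖x‖ = 1} :=
    ⟨⟨1, SetLike.mem_coe.mpr (one_mem A₁), norm_one⟩⟩
  haveI hne₂ : Nonempty {y : H →L[ℂ] H // y ∈ (A₂ : Set (H →L[ℂ] H)) ∧ ‖y‖ = 1} :=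
    ⟨⟨1, SetLike.mem_coe.mpr (one_mem A₂), norm_one⟩⟩
  have key₁ : ∀ x : H →L[ℂ] H, x ∈ A₁ → ‖x‖ = 1 →
      ∃ y : H →L[ℂ] H, y ∈ A₂ ∧ ‖y‖ = 1 ∧ ‖x - y‖ < δ := by
    intro x hx hx1
    obtain ⟨y, hy, hy1, hy2⟩ := near_of_sup_inf_lt hne₂ hd₁ (SetLike.mem_coe.mpr hx) hx1
    exact ⟨y, SetLike.mem_coe.mp hy, hy1, hy2⟩
  have key₂ : ∀ y : H →L[ℂ] H, y ∈ A₂ → ‖y‖ = 1 →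
      ∃ x : H →L[ℂ] H, x ∈ A₁ ∧ ‖x‖ = 1 ∧ ‖x - y‖ < δ := by
    intro y hy hy1
    obtain ⟨x, hx, hx1, hx2⟩ := near_of_sup_inf_lt' hne₁ hd₂ (SetLike.mem_coe.mpr hy) hy1
    exact ⟨x, SetLike.mem_coe.mp hx, hx1, hx2⟩
  -- construct the near-map `g : A₁ → A₂`
  have hmk : ∀ u : A₁, ∃ w : A₂,
      ‖(w : H →L[ℂ] H) - (u : H →L[ℂ] H)‖ ≤ ‖(u : H →L[ℂ] H)‖ * δ ∧
      ‖(w : H →L[ℂ] H)‖ = ‖(u : H →L[ℂ] H)‖ ∧ ((u : H →L[ℂ] H) = 0 → w = 0) := by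
    intro u
    by_cases h : (u : H →L[ℂ] H) = 0
    · exact ⟨0, by simp [h], by simp [h], fun _ => rfl⟩
    · set c : ℝ := ‖(u : H →L[ℂ] H)‖ with hc
      have hc0 : 0 < c := norm_pos_iff.mpr h
      have hcne : (c : ℂ) ≠ 0 := by exact_mod_cast hc0.ne'
      have hxmem : (c : ℂ)⁻¹ • (u : H →L[ℂ] H) ∈ A₁ :=
        SMulMemClass.smul_mem _ u.2
      have hxnorm : ‖(c : ℂ)⁻¹ • (u : H →L[ℂ] H)‖ = 1 := by
        rw [norm_smul, norm_inv, Complex.norm_real, Real.norm_eq_abs, abs_of_pos hc0, ← hc,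
          inv_mul_cancel₀ hc0.ne']
      obtain ⟨y, hy, hy1, hy2⟩ := key₁ _ hxmem hxnorm
      refine ⟨⟨(c : ℂ) • y, SMulMemClass.smul_mem _ hy⟩, ?_, ?_, fun h0 => absurd h0 h⟩
      · show ‖(c : ℂ) • y - (u : H →L[ℂ] H)‖ ≤ c * δ
        have e : (c : ℂ) • y - (u : H →L[ℂ] H)
            = (c : ℂ) • (y - (c : ℂ)⁻¹ • (u : H →L[ℂ] H)) := by
          rw [smul_sub, smul_inv_smul₀ hcne]
        rw [e, norm_smul, Complex.norm_real, Real.norm_eq_abs, abs_of_pos hc0]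
        have := norm_sub_rev ((c : ℂ)⁻¹ • (u : H →L[ℂ] H)) y ▸ hy2.le
        exact mul_le_mul_of_nonneg_left this hc0.le
      · show ‖(c : ℂ) • y‖ = c
        rw [norm_smul, Complex.norm_real, Real.norm_eq_abs, abs_of_pos hc0, hy1, mul_one]
  choose g hg1 hg2 hg3 using hmk
  -- the approximate *-isomorphism `φ : A → A`
  set φ : A → A := fun a => θ₂.symm (g (θ₁ a)) with hφdef
  have n1 : ∀ a : A, ‖(θ₁ a : H →L[ℂ] H)‖ = ‖a‖ := fun a => StarAlgEquiv.norm_map θ₁ a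
  have n2 : ∀ b : A, ‖(θ₂ b : H →L[ℂ] H)‖ = ‖b‖ := fun b => StarAlgEquiv.norm_map θ₂ b
  have n2s : ∀ v : A₂, ‖θ₂.symm v‖ = ‖(v : H →L[ℂ] H)‖ := fun v =>
    StarAlgEquiv.norm_map θ₂.symm v
  have n1s : ∀ u : A₁, ‖θ₁.symm u‖ = ‖(u : H →L[ℂ] H)‖ := fun u =>
    StarAlgEquiv.norm_map θ₁.symm u
  have nφ : ∀ a : A, ‖φ a‖ = ‖a‖ := fun a => by
    show ‖θ₂.symm (g (θ₁ a))‖ = ‖a‖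
    rw [n2s, hg2, n1]
  have tri3 : ∀ P Q R : H →L[ℂ] H, ‖P - Q - R‖ ≤ ‖P‖ + ‖Q‖ + ‖R‖ := fun P Q R => by
    calc ‖P - Q - R‖ ≤ ‖P - Q‖ + ‖R‖ := norm_sub_le _ _
      _ ≤ ‖P‖ + ‖Q‖ + ‖R‖ := add_le_add_left (norm_sub_le _ _) _
  have cadd : ∀ x y : A, ‖x‖ ≤ 1 → ‖y‖ ≤ 1 → ‖φ (x + y) - φ x - φ y‖ ≤ δ₀ := by
    intro x y hx hy
    have e1 : φ (x + y) - φ x - φ y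
        = θ₂.symm (g (θ₁ (x + y)) - g (θ₁ x) - g (θ₁ y)) := by
      simp [hφdef, map_sub]
    rw [e1, n2s]
    have huv : ((θ₁ (x + y) : A₁) : H →L[ℂ] H)
        = ((θ₁ x : A₁) : H →L[ℂ] H) + ((θ₁ y : A₁) : H →L[ℂ] H) := by
      rw [map_add]; push_cast; ring
    have ecoe : ((g (θ₁ (x + y)) - g (θ₁ x) - g (θ₁ y) : A₂) : H →L[ℂ] H)
        = ((g (θ₁ (x + y)) : H →L[ℂ] H) - (θ₁ (x + y) : H →L[ℂ] H))
          - ((g (θ₁ x) : H →L[ℂ] H) - (θ₁ x : H →L[ℂ] H))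
          - ((g (θ₁ y) : H →L[ℂ] H) - (θ₁ y : H →L[ℂ] H)) := by
      push_cast
      rw [huv]; abel
    rw [ecoe]
    have b1 := hg1 (θ₁ (x + y)); have b2 := hg1 (θ₁ x); have b3 := hg1 (θ₁ y)
    have nxy : ‖(θ₁ (x + y) : H →L[ℂ] H)‖ ≤ 2 := by
      rw [n1]
      calc ‖x + y‖ ≤ ‖x‖ + ‖y‖ := norm_add_le _ _
        _ ≤ 2 := by linarith
    have nx : ‖(θ₁ x : H →L[ℂ] H)‖ ≤ 1 := by rw [n1]; exact hx
    have ny : ‖(θ₁ y : H →L[ℂ] H)‖ ≤ 1 := by rw [n1]; exact hy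
    refine (tri3 _ _ _).trans ?_
    nlinarith [hδpos.le, mul_le_mul_of_nonneg_right nxy hδpos.le,
      mul_le_mul_of_nonneg_right nx hδpos.le, mul_le_mul_of_nonneg_right ny hδpos.le]
  have csmul : ∀ (x : A) (l : ℂ), ‖x‖ ≤ 1 → ‖l‖ ≤ 1 → ‖φ (l • x) - l • φ x‖ ≤ δ₀ := by
    intro x l hx hl
    have e1 : φ (l • x) - l • φ x = θ₂.symm (g (θ₁ (l • x)) - l • g (θ₁ x)) := by
      simp [hφdef, map_sub, map_smul]
    rw [e1, n2s]
    have hlu : ((θ₁ (l • x) : A₁) : H →L[ℂ] H) = l • ((θ₁ x : A₁) : H →L[ℂ] H) := by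
      rw [map_smul]; push_cast; ring
    have ecoe : ((g (θ₁ (l • x)) - l • g (θ₁ x) : A₂) : H →L[ℂ] H)
        = ((g (θ₁ (l • x)) : H →L[ℂ] H) - (θ₁ (l • x) : H →L[ℂ] H))
          + l • ((θ₁ x : H →L[ℂ] H) - (g (θ₁ x) : H →L[ℂ] H)) := by
      push_cast
      rw [hlu, smul_sub]; abel
    rw [ecoe]
    have b1 := hg1 (θ₁ (l • x)); have b2 := hg1 (θ₁ x)
    have nx : ‖(θ₁ x : H →L[ℂ] H)‖ ≤ 1 := by rw [n1]; exact hx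
    have nlu : ‖(θ₁ (l • x) : H →L[ℂ] H)‖ ≤ 1 := by
      rw [n1, norm_smul]
      exact mul_le_one₀ hl (norm_nonneg _) hx
    refine (norm_add_le _ _).trans ?_
    have h2' : ‖l • ((θ₁ x : H →L[ℂ] H) - (g (θ₁ x) : H →L[ℂ] H))‖ ≤ δ := by
      rw [norm_smul, norm_sub_rev]
      calc ‖l‖ * ‖(g (θ₁ x) : H →L[ℂ] H) - (θ₁ x : H →L[ℂ] H)‖
          ≤ 1 * (1 * δ) := by
            refine mul_le_mul hl (b2.trans ?_) (norm_nonneg _) zero_le_one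
            exact mul_le_mul_of_nonneg_right nx hδpos.le
        _ = δ := by ring
    have h1' : ‖(g (θ₁ (l • x)) : H →L[ℂ] H) - (θ₁ (l • x) : H →L[ℂ] H)‖ ≤ δ := by
      refine b1.trans ?_
      nlinarith [hδpos.le]
    linarith
  have cmul : ∀ x y : A, ‖x‖ ≤ 1 → ‖y‖ ≤ 1 → ‖φ (x * y) - φ x * φ y‖ ≤ δ₀ := by
    intro x y hx hy
    have e1 : φ (x * y) - φ x * φ y = θ₂.symm (g (θ₁ (x * y)) - g (θ₁ x) * g (θ₁ y)) := by
      simp [hφdef, map_sub, map_mul]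
    rw [e1, n2s]
    have huv : ((θ₁ (x * y) : A₁) : H →L[ℂ] H)
        = ((θ₁ x : A₁) : H →L[ℂ] H) * ((θ₁ y : A₁) : H →L[ℂ] H) := by
      rw [map_mul]; push_cast; ring
    have ecoe : ((g (θ₁ (x * y)) - g (θ₁ x) * g (θ₁ y) : A₂) : H →L[ℂ] H)
        = ((g (θ₁ (x * y)) : H →L[ℂ] H) - (θ₁ (x * y) : H →L[ℂ] H))
          + (θ₁ x : H →L[ℂ] H) * ((θ₁ y : H →L[ℂ] H) - (g (θ₁ y) : H →L[ℂ] H))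
          + ((θ₁ x : H →L[ℂ] H) - (g (θ₁ x) : H →L[ℂ] H)) * (g (θ₁ y) : H →L[ℂ] H) := by
      push_cast
      rw [huv]; noncomm_ring
    rw [ecoe]
    have b1 := hg1 (θ₁ (x * y)); have b2 := hg1 (θ₁ x); have b3 := hg1 (θ₁ y)
    have nx : ‖(θ₁ x : H →L[ℂ] H)‖ ≤ 1 := by rw [n1]; exact hx
    have ny : ‖(θ₁ y : H →L[ℂ] H)‖ ≤ 1 := by rw [n1]; exact hy
    have ngy : ‖(g (θ₁ y) : H →L[ℂ] H)‖ ≤ 1 := by rw [hg2]; exact ny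
    have nxy : ‖(θ₁ (x * y) : H →L[ℂ] H)‖ ≤ 1 := by
      rw [n1]
      calc ‖x * y‖ ≤ ‖x‖ * ‖y‖ := norm_mul_le _ _
        _ ≤ 1 := mul_le_one₀ hx (norm_nonneg _) hy
    have t1 : ‖(g (θ₁ (x * y)) : H →L[ℂ] H) - (θ₁ (x * y) : H →L[ℂ] H)‖ ≤ δ := by
      refine b1.trans ?_; nlinarith [hδpos.le]
    have t2 : ‖(θ₁ x : H →L[ℂ] H) * ((θ₁ y : H →L[ℂ] H) - (g (θ₁ y) : H →L[ℂ] H))‖ ≤ δ := by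
      refine (norm_mul_le _ _).trans ?_
      rw [norm_sub_rev]
      have := hg1 (θ₁ y)
      nlinarith [norm_nonneg ((θ₁ x : H →L[ℂ] H)), hδpos.le,
        norm_nonneg ((g (θ₁ y) : H →L[ℂ] H) - (θ₁ y : H →L[ℂ] H))]
    have t3 : ‖((θ₁ x : H →L[ℂ] H) - (g (θ₁ x) : H →L[ℂ] H)) * (g (θ₁ y) : H →L[ℂ] H)‖ ≤ δ := by
      refine (norm_mul_le _ _).trans ?_
      rw [norm_sub_rev]
      nlinarith [hδpos.le, norm_nonneg ((g (θ₁ x) : H →L[ℂ] H) - (θ₁ x : H →L[ℂ] H))]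
    calc ‖_ + _ + _‖ ≤ ‖_ + _‖ + ‖_‖ := norm_add_le _ _
      _ ≤ ‖_‖ + ‖_‖ + ‖_‖ := add_le_add_left (norm_add_le _ _) _
      _ ≤ δ + δ + δ := by exact add_le_add (add_le_add t1 t2) t3
      _ ≤ δ₀ := by linarith
  have cstar : ∀ x : A, ‖x‖ ≤ 1 → ‖φ (star x) - star (φ x)‖ ≤ δ₀ := by
    intro x hx
    have e1 : φ (star x) - star (φ x) = θ₂.symm (g (θ₁ (star x)) - star (g (θ₁ x))) := by
      simp [hφdef, map_sub, map_star]
    rw [e1, n2s]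
    have hsu : ((θ₁ (star x) : A₁) : H →L[ℂ] H) = star ((θ₁ x : A₁) : H →L[ℂ] H) := by
      rw [map_star]; rfl
    have ecoe : ((g (θ₁ (star x)) - star (g (θ₁ x)) : A₂) : H →L[ℂ] H)
        = ((g (θ₁ (star x)) : H →L[ℂ] H) - (θ₁ (star x) : H →L[ℂ] H))
          - star ((g (θ₁ x) : H →L[ℂ] H) - (θ₁ x : H →L[ℂ] H)) := by
      push_cast
      rw [hsu, star_sub]; abel
    rw [ecoe]
    have b1 := hg1 (θ₁ (star x)); have b2 := hg1 (θ₁ x)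
    have nx : ‖(θ₁ x : H →L[ℂ] H)‖ ≤ 1 := by rw [n1]; exact hx
    have nsx : ‖(θ₁ (star x) : H →L[ℂ] H)‖ ≤ 1 := by rw [n1, norm_star]; exact hx
    have t1 : ‖(g (θ₁ (star x)) : H →L[ℂ] H) - (θ₁ (star x) : H →L[ℂ] H)‖ ≤ δ := by
      refine b1.trans ?_; nlinarith [hδpos.le]
    have t2 : ‖star ((g (θ₁ x) : H →L[ℂ] H) - (θ₁ x : H →L[ℂ] H))‖ ≤ δ := by
      rw [norm_star]
      refine b2.trans ?_; nlinarith [hδpos.le]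
    refine (norm_sub_le _ _).trans ?_
    linarith
  have cbound : ∀ x : A, ‖x‖ ≤ 1 → ‖φ x‖ ≤ 1 + δ₀ := fun x hx => by
    rw [nφ]; linarith
  have cisom : ∀ x : A, ‖x‖ = 1 → ‖φ x‖ ∈ Set.Icc (1 - δ₀) (1 + δ₀) := fun x hx => by
    rw [nφ, hx]; constructor <;> linarith
  have csurj : ∀ b : A, ‖b‖ ≤ 1 → ∃ a : A, ‖φ a - b‖ ≤ δ₀ := by
    intro b hb
    by_cases hv : ((θ₂ b : A₂) : H →L[ℂ] H) = 0
    · have hb0 : b = 0 := by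
        have : ‖b‖ = 0 := by rw [← n2, hv, norm_zero]
        exact norm_eq_zero.mp this
      refine ⟨0, ?_⟩
      have hθ0 : ((θ₁ (0 : A) : A₁) : H →L[ℂ] H) = 0 := by rw [map_zero]; rfl
      have : φ 0 = 0 := by
        show θ₂.symm (g (θ₁ 0)) = 0
        rw [hg3 _ hθ0, map_zero]
      rw [this, hb0, sub_zero, norm_zero]
      linarith
    · set c : ℝ := ‖((θ₂ b : A₂) : H →L[ℂ] H)‖ with hc
      have hc0 : 0 < c := norm_pos_iff.mpr hv
      have hc1 : c ≤ 1 := by rw [hc, n2]; exact hb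
      have hcne : (c : ℂ) ≠ 0 := by exact_mod_cast hc0.ne'
      have hymem : (c : ℂ)⁻¹ • ((θ₂ b : A₂) : H →L[ℂ] H) ∈ A₂ :=
        SMulMemClass.smul_mem _ (θ₂ b).2
      have hynorm : ‖(c : ℂ)⁻¹ • ((θ₂ b : A₂) : H →L[ℂ] H)‖ = 1 := by
        rw [norm_smul, norm_inv, Complex.norm_real, Real.norm_eq_abs, abs_of_pos hc0, ← hc,
          inv_mul_cancel₀ hc0.ne']
      obtain ⟨x₀, hx₀, hx₀1, hx₀2⟩ := key₂ _ hymem hynorm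
      set w : A₁ := ⟨(c : ℂ) • x₀, SMulMemClass.smul_mem _ hx₀⟩ with hw
      refine ⟨θ₁.symm w, ?_⟩
      have e1 : φ (θ₁.symm w) - b = θ₂.symm (g w - θ₂ b) := by
        show θ₂.symm (g (θ₁ (θ₁.symm w))) - b = _
        rw [StarAlgEquiv.apply_symm_apply, map_sub, StarAlgEquiv.symm_apply_apply]
      rw [e1, n2s]
      have hwne : (w : H →L[ℂ] H) = (c : ℂ) • x₀ := rfl
      have hwnorm : ‖(w : H →L[ℂ] H)‖ = c := by
        rw [hwne, norm_smul, Complex.norm_real, Real.norm_eq_abs, abs_of_pos hc0, hx₀1, mul_one]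
      have ecoe : ((g w - θ₂ b : A₂) : H →L[ℂ] H)
          = ((g w : H →L[ℂ] H) - (w : H →L[ℂ] H))
            + (c : ℂ) • (x₀ - (c : ℂ)⁻¹ • ((θ₂ b : A₂) : H →L[ℂ] H)) := by
        have hcoe : ((g w - θ₂ b : A₂) : H →L[ℂ] H)
            = (g w : H →L[ℂ] H) - ((θ₂ b : A₂) : H →L[ℂ] H) := rfl
        rw [hcoe, smul_sub, smul_inv_smul₀ hcne, hwne]; abel
      rw [ecoe]
      have t1 : ‖(g w : H →L[ℂ] H) - (w : H →L[ℂ] H)‖ ≤ δ := by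
        refine (hg1 w).trans ?_
        rw [hwnorm]; nlinarith [hδpos.le]
      have t2 : ‖(c : ℂ) • (x₀ - (c : ℂ)⁻¹ • ((θ₂ b : A₂) : H →L[ℂ] H))‖ ≤ δ := by
        rw [norm_smul, Complex.norm_real, Real.norm_eq_abs, abs_of_pos hc0]
        nlinarith [hx₀2.le, norm_nonneg (x₀ - (c : ℂ)⁻¹ • ((θ₂ b : A₂) : H →L[ℂ] H))]
      refine (norm_add_le _ _).trans ?_
      linarith
  have hiso : IsApproxStarIso δ₀ φ := ⟨⟨cadd, csmul, cmul, cstar, cbound⟩, cisom, csurj⟩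
  obtain ⟨ψ, hψ⟩ := hU A hAF φ hiso
  refine ⟨θ₁.symm.trans (ψ.trans θ₂), fun x hx => ?_⟩
  have hax : ‖θ₁.symm x‖ ≤ 1 := by rw [n1s]; exact hx
  have h₁ := hψ (θ₁.symm x) hax
  have hgx : θ₂ (φ (θ₁.symm x)) = g x := by
    show θ₂ (θ₂.symm (g (θ₁ (θ₁.symm x)))) = g x
    rw [StarAlgEquiv.apply_symm_apply, StarAlgEquiv.apply_symm_apply]
  have happ : ((θ₁.symm.trans (ψ.trans θ₂)) x : A₂) = θ₂ (ψ (θ₁.symm x)) := rfl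
  have e2 : (((θ₁.symm.trans (ψ.trans θ₂)) x : A₂) : H →L[ℂ] H) - (x : H →L[ℂ] H)
      = (((θ₂ (ψ (θ₁.symm x)) : A₂) : H →L[ℂ] H) - ((θ₂ (φ (θ₁.symm x)) : A₂) : H →L[ℂ] H))
        + (((g x : A₂) : H →L[ℂ] H) - (x : H →L[ℂ] H)) := by
    rw [happ, hgx]; abel
  rw [e2]
  have t1 : ‖((θ₂ (ψ (θ₁.symm x)) : A₂) : H →L[ℂ] H)
      - ((θ₂ (φ (θ₁.symm x)) : A₂) : H →L[ℂ] H)‖ < ε / 2 := by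
    have e3 : ((θ₂ (ψ (θ₁.symm x)) : A₂) : H →L[ℂ] H)
        - ((θ₂ (φ (θ₁.symm x)) : A₂) : H →L[ℂ] H)
        = ((θ₂ (ψ (θ₁.symm x) - φ (θ₁.symm x)) : A₂) : H →L[ℂ] H) := by
      rw [map_sub]; push_cast; ring
    rw [e3, n2, norm_sub_rev]
    exact h₁
  have t2 : ‖((g x : A₂) : H →L[ℂ] H) - (x : H →L[ℂ] H)‖ ≤ ε / 2 := by
    refine (hg1 x).trans ?_
    nlinarith [hδpos.le, norm_nonneg ((x : A₁) : H →L[ℂ] H)]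
  refine lt_of_le_of_lt (norm_add_le _ _) ?_
  linarith
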